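/- The sequence α^(M)(ℓ) = ∏_{i=0}^{ℓ−1} (ℓ+3i+2)/(ℓ+3i+3) satisfies α^(M)(ℓ) > 2^(−2/3) for all ℓ ≥ 1. -/

import Mathlib

lemma tele13 (x : ℝ) (hx : 0 < x) (n : ℕ) :
    ∏ i ∈ Finset.range n, (x + 3 * i) / (x + 3 * i + 3) = x / (x + 3 * n) := by
  induction n with
  | zero => simp [div_self hx.ne']
  | succ n ih =>
    rw [Finset.prod_range_succ, ih]
    have h1 : (0:ℝ) < x + 3 * n := by positivity
    have h2 : (0:ℝ) < x + 3 * n + 3 := by positivity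
    rw [div_mul_div_comm, div_eq_div_iff (by positivity) (by positivity)]
    push_cast
    ring

theorem stmt13 (ℓ : ℕ) (hℓ : 1 ≤ ℓ) :
    ∏ i ∈ Finset.range ℓ, ((ℓ : ℝ) + 3 * i + 2) / ((ℓ : ℝ) + 3 * i + 3) >
      (2 : ℝ) ^ (-(2 / 3) : ℝ) := by
  set x : ℝ := (ℓ : ℝ) with hxdef
  have hx : (1:ℝ) ≤ x := Nat.one_le_cast.mpr hℓ
  have hx0 : (0:ℝ) < x := by linarith
  set P := ∏ i ∈ Finset.range ℓ, (x + 3 * i + 2) / (x + 3 * i + 3) with hP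
  set Q := ∏ i ∈ Finset.range ℓ, (x + 3 * i + 1) / (x + 3 * i + 2) with hQ
  set R := ∏ i ∈ Finset.range ℓ, (x + 3 * i) / (x + 3 * i + 1) with hR
  have hne : (Finset.range ℓ).Nonempty := by
    exact Finset.nonempty_range_iff.mpr (by omega)
  have hPQR : P * Q * R = 1 / 4 := by
    rw [hP, hQ, hR, ← Finset.prod_mul_distrib, ← Finset.prod_mul_distrib]
    have : ∀ i ∈ Finset.range ℓ,
        (x + 3 * i + 2) / (x + 3 * i + 3) * ((x + 3 * i + 1) / (x + 3 * i + 2)) *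
          ((x + 3 * i) / (x + 3 * i + 1)) = (x + 3 * i) / (x + 3 * i + 3) := by
      intro i _
      have h0 : (0:ℝ) < x + 3 * i := by positivity
      have h1 : (0:ℝ) < x + 3 * i + 1 := by positivity
      have h2 : (0:ℝ) < x + 3 * i + 2 := by positivity
      field_simp
    rw [Finset.prod_congr rfl this, tele13 x hx0 ℓ]
    rw [← hxdef]
    field_simp
    ring
  have hQpos : 0 < Q := by
    rw [hQ]; apply Finset.prod_pos; intro i _; positivity
  have hRpos : 0 < R := by
    rw [hR]; apply Finset.prod_pos; intro i _; positivity
  have hPQ : Q < P := by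
    rw [hP, hQ]
    apply Finset.prod_lt_prod_of_nonempty _ _ hne
    · intro i _; positivity
    · intro i _
      rw [div_lt_div_iff₀ (by positivity) (by positivity)]
      nlinarith [sq_nonneg ((i:ℝ))]
  have hQR : R < Q := by
    rw [hQ, hR]
    apply Finset.prod_lt_prod_of_nonempty _ _ hne
    · intro i _; positivity
    · intro i _
      rw [div_lt_div_iff₀ (by positivity) (by positivity)]
      nlinarith [sq_nonneg ((i:ℝ))]
  have hPpos : 0 < P := lt_trans hQpos hPQ
  have hcube : (1:ℝ) / 4 < P ^ 3 := by
    have h1 : P * Q * R < P * (Q * Q) := by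
      rw [mul_assoc]
      exact mul_lt_mul_of_pos_left (mul_lt_mul_of_pos_left hQR hQpos) hPpos
    have h2 : P * (Q * Q) < P * (P * P) := by
      have := mul_lt_mul'' hPQ hPQ hQpos.le hQpos.le
      exact mul_lt_mul_of_pos_left this hPpos
    calc (1:ℝ)/4 = P * Q * R := hPQR.symm
    _ < P * (P * P) := lt_trans h1 h2
    _ = P ^ 3 := by ring
  have hc : ((2:ℝ) ^ (-(2/3) : ℝ)) ^ 3 = 1 / 4 := by
    rw [← Real.rpow_natCast ((2:ℝ) ^ (-(2/3):ℝ)) 3, ← Real.rpow_mul (by norm_num)]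
    norm_num
  have : ((2:ℝ) ^ (-(2/3) : ℝ)) ^ 3 < P ^ 3 := by rw [hc]; exact hcube
  exact lt_of_pow_lt_pow_left₀ 3 (le_of_lt hPpos) this
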